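/- For a, b ∈ ℝ with a ≠ 0 and b₁ < b/a < 3 − 2√3, where b₁ = (3/7)(3 − 2·9^{1/3}/(−12+7√3)^{1/3} + 2(−36+21√3)^{1/3}), the polynomial P_{a,b}(x,y) = ax³ + bx²y + bxy² + ay³ satisfies sup_{(x,y)∈[−1,1]²} |P_{a,b}(x,y)| = |a − b²/(3a) + 2b³/(27a²) + (2a/27)(−3b/a + b²/a²)^{3/2}|. -/

import Mathlib

/-- Supremum of `|a x³ + b x² y + b x y² + a y³|` over the unit square `[-1,1]²`. -/
noncomputable def supCubic (a b : ℝ) : ℝ :=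
  sSup {r : ℝ | ∃ x y : ℝ, |x| ≤ 1 ∧ |y| ≤ 1 ∧
    r = |a * x^3 + b * x^2 * y + b * x * y^2 + a * y^3|}

noncomputable def b₁ : ℝ :=
  (3/7) * (3 - 2 * (9:ℝ) ^ ((1:ℝ)/3) / (-12 + 7 * Real.sqrt 3) ^ ((1:ℝ)/3)
      + 2 * (-36 + 21 * Real.sqrt 3) ^ ((1:ℝ)/3))

/-- `b₁` is a root of the cubic `7 t³ - 27 t² + 81 t + 243`. -/
lemma b1_root : 7*b₁^3 - 27*b₁^2 + 81*b₁ + 243 = 0 := by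
  have h3 : Real.sqrt 3 ^ 2 = 3 := Real.sq_sqrt (by norm_num)
  have h3n : (0:ℝ) ≤ Real.sqrt 3 := Real.sqrt_nonneg 3
  have h127 : (12:ℝ)/7 < Real.sqrt 3 := by nlinarith
  have hA0 : (0:ℝ) < -12 + 7 * Real.sqrt 3 := by linarith
  have hB0base : (0:ℝ) < -36 + 21 * Real.sqrt 3 := by linarith
  set A : ℝ := (-12 + 7 * Real.sqrt 3) ^ ((1:ℝ)/3) with hAdef
  set B : ℝ := (-36 + 21 * Real.sqrt 3) ^ ((1:ℝ)/3) with hBdef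
  have hApos : 0 < A := Real.rpow_pos_of_pos hA0 _
  have hBpos : 0 < B := Real.rpow_pos_of_pos hB0base _
  have hB3 : B ^ 3 = -36 + 21 * Real.sqrt 3 := by
    rw [hBdef, ← Real.rpow_natCast ((-36 + 21*Real.sqrt 3) ^ ((1:ℝ)/3)) 3,
      ← Real.rpow_mul hB0base.le]
    norm_num
  have hBA : B = (3:ℝ) ^ ((1:ℝ)/3) * A := by
    rw [hBdef, hAdef, show (-36:ℝ) + 21 * Real.sqrt 3 = 3 * (-12 + 7 * Real.sqrt 3) by ring,
      Real.mul_rpow (by norm_num) hA0.le]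
  have h9 : (9:ℝ) ^ ((1:ℝ)/3) * (3:ℝ) ^ ((1:ℝ)/3) = 3 := by
    rw [← Real.mul_rpow (by norm_num) (by norm_num)]
    rw [show (9:ℝ) * 3 = 27 by norm_num]
    rw [show (27:ℝ) = (3:ℝ)^(3:ℕ) by norm_num, ← Real.rpow_natCast (3:ℝ) 3,
      ← Real.rpow_mul (show (0:ℝ) ≤ 3 by norm_num)]
    norm_num
  have hdiv : 2 * (9:ℝ) ^ ((1:ℝ)/3) / A = 6 / B := by
    rw [hBA]
    rw [div_eq_div_iff (by positivity) (by positivity)]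
    calc 2 * (9:ℝ) ^ ((1:ℝ)/3) * ((3:ℝ) ^ ((1:ℝ)/3) * A)
        = 2 * ((9:ℝ) ^ ((1:ℝ)/3) * (3:ℝ) ^ ((1:ℝ)/3)) * A := by ring
      _ = 6 * A := by rw [h9]; ring
  have hb1 : b₁ = (3/7) * (3 - 6 / B + 2 * B) := by
    rw [b₁, ← hAdef, ← hBdef, hdiv]
  have hEB : b₁ * B = (3/7) * (2*B^2 + 3*B - 6) := by
    rw [hb1]
    field_simp
    ring
  have hr : Real.sqrt 3 * Real.sqrt 3 = 3 := Real.mul_self_sqrt (by norm_num)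
  have hp : (7*b₁^3 - 27*b₁^2 + 81*b₁ + 243) * B^3 = 0 := by
    have expand : (7*b₁^3 - 27*b₁^2 + 81*b₁ + 243) * B^3
        = 7*(b₁*B)^3 - 27*(b₁*B)^2*B + 81*(b₁*B)*B^2 + 243*B^3 := by ring
    rw [expand, hEB]
    have hB3' : B^3 = 21 * Real.sqrt 3 - 36 := by rw [hB3]; ring
    linear_combination (7776/49 + (648/7) * Real.sqrt 3 + (216/49) * B^3) * hB3' + 1944 * hr
  have hB3ne : B^3 ≠ 0 := by positivity
  exact (mul_eq_zero.mp hp).resolve_right hB3ne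

lemma cub_pos (t : ℝ) (h1 : b₁ < t) : 0 < 7*t^3 - 27*t^2 + 81*t + 243 := by
  have h0 := b1_root
  have hd : 0 < t - b₁ := by linarith
  nlinarith [mul_nonneg hd.le (sq_nonneg (t - b₁)), mul_nonneg hd.le (sq_nonneg (t + b₁ - 18/7)),
    h0, hd]

lemma t_gt_neg3 (t : ℝ) (hc : 0 < 7*t^3 - 27*t^2 + 81*t + 243) : -3 < t := by
  by_contra h
  push_neg at h
  nlinarith [mul_nonneg (show (0:ℝ) ≤ -3 - t by linarith) (sq_nonneg t), sq_nonneg (t+3)]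

/-- Key edge inequality: the edge cubic is bounded by the candidate maximum. -/
lemma aux_edge (t s u : ℝ) (hs2 : s^2 = t^2 - 3*t) (h2s : 3 + t ≤ 2*s)
    (hu0 : 0 ≤ u) (hu2 : u ≤ 2) :
    u^3 + (t-3)*u^2 - (t-3)*u ≤ 1 - t^2/3 + 2*t^3/27 + 2*s^3/27 := by
  have key : 1 - t^2/3 + 2*t^3/27 + 2*s^3/27 - (u^3 + (t-3)*u^2 - (t-3)*u)
      = (u - 1 + t/3 + s/3)^2 * (1 - t/3 + 2*s/3 - u) := by
    linear_combination (1/3 - u/3 - t/9) * hs2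
  have hf : 0 ≤ 1 - t/3 + 2*s/3 - u := by linarith
  nlinarith [mul_nonneg (sq_nonneg (u - 1 + t/3 + s/3)) hf, key]

/-- Lower-side inequality coming from `t > b₁`. -/
lemma aux_low (t s : ℝ) (hs2 : s^2 = t^2 - 3*t) (hs0 : 0 < s)
    (hcub : 0 < 7*t^3 - 27*t^2 + 81*t + 243) :
    0 ≤ 2*s^3 + (2*t^3 - 9*t^2 + 54*t + 81) := by
  rcases le_or_gt 0 (2*t^3 - 9*t^2 + 54*t + 81) with h | h
  · have : 0 < s^3 := pow_pos hs0 3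
    linarith
  · have ht1 : t + 1 ≤ 0 := by
      by_contra hcon
      push_neg at hcon
      nlinarith [mul_nonneg (show (0:ℝ) ≤ t+1 by linarith)
        (show (0:ℝ) ≤ 2*t^2 - 11*t + 65 by nlinarith [sq_nonneg (t - 11/4)])]
    have h46 : 4*s^6 = 4*(t^2-3*t)^3 := by
      rw [show s^6 = (s^2)^3 by ring, hs2]
    have hid : 4*(t^2-3*t)^3 - (2*t^3 - 9*t^2 + 54*t + 81)^2
        = -27*(t+1)*(7*t^3 - 27*t^2 + 81*t + 243) := by ring
    have hprod : (t+1)*(7*t^3 - 27*t^2 + 81*t + 243) ≤ 0 :=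
      mul_nonpos_of_nonpos_of_nonneg ht1 hcub.le
    have hF : (2*t^3 - 9*t^2 + 54*t + 81)^2 ≤ 4*s^6 := by
      rw [h46]; linarith
    by_contra hcon
    push_neg at hcon
    have hfac : 0 < -(2*s^3 + (2*t^3 - 9*t^2 + 54*t + 81)) := by linarith
    have hfac2 : 0 < 2*s^3 - (2*t^3 - 9*t^2 + 54*t + 81) := by
      have : 0 < s^3 := pow_pos hs0 3
      linarith
    nlinarith [mul_pos hfac hfac2, hF]

/-- Core bound on the unit square for normalized polynomial. -/
lemma core (t s x y : ℝ) (hs2 : s^2 = t^2 - 3*t) (hs0 : 0 < s) (h2s : 3 + t ≤ 2*s)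
    (ht0 : t < 0)
    (hC : 0 ≤ 2*s^3 + (2*t^3 - 9*t^2 + 54*t + 81))
    (hx : |x| ≤ 1) (hy : |y| ≤ 1) :
    |x^3 + t*x^2*y + t*x*y^2 + y^3| ≤ 1 - t^2/3 + 2*t^3/27 + 2*s^3/27 := by
  have hM0 : (0:ℝ) ≤ 1 - t^2/3 + 2*t^3/27 + 2*s^3/27 := by
    have h := aux_edge t s 0 hs2 h2s le_rfl (by norm_num)
    nlinarith [h]
  suffices H : ∀ p q : ℝ, |p| ≤ 1 → |q| ≤ 1 → 0 ≤ p + q →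
      |p^3 + t*p^2*q + t*p*q^2 + q^3| ≤ 1 - t^2/3 + 2*t^3/27 + 2*s^3/27 by
    rcases le_total 0 (x+y) with hu | hu
    · exact H x y hx hy hu
    · have h1 := H (-x) (-y) (by rwa [abs_neg]) (by rwa [abs_neg]) (by linarith)
      have h2 : (-x)^3 + t*(-x)^2*(-y) + t*(-x)*(-y)^2 + (-y)^3
          = -(x^3 + t*x^2*y + t*x*y^2 + y^3) := by ring
      rwa [h2, abs_neg] at h1
  intro p q hp hq hu
  rw [abs_le] at hp hq ⊢
  obtain ⟨hp1, hp2⟩ := hp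
  obtain ⟨hq1, hq2⟩ := hq
  have hu2 : p + q ≤ 2 := by linarith
  have hv1 : p + q - 1 ≤ p*q := by
    nlinarith [mul_nonneg (show (0:ℝ) ≤ 1-p by linarith) (show (0:ℝ) ≤ 1-q by linarith)]
  have hv2 : p*q ≤ (p+q)^2/4 := by nlinarith [sq_nonneg (p-q)]
  have hnp : (t-3)*(p+q) ≤ 0 := by
    have ht3 : t - 3 ≤ 0 := by linarith
    exact mul_nonpos_of_nonpos_of_nonneg ht3 hu
  have hexpr : p^3 + t*p^2*q + t*p*q^2 + q^3 = (p+q)^3 + (t-3)*(p+q)*(p*q) := by ring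
  constructor
  · -- lower bound
    have ha1 : (t-3)*(p+q)*((p+q)^2/4) ≤ (t-3)*(p+q)*(p*q) :=
      mul_le_mul_of_nonpos_left hv2 hnp
    have hr : (p+q)^3 + (t-3)*(p+q)*((p+q)^2/4) = (p+q)^3*(t+1)/4 := by ring
    have hu3 : (p+q)^3 ≤ 8 := by nlinarith
    have hu3' : 0 ≤ (p+q)^3 := pow_nonneg hu 3
    rcases le_total 0 (t+1) with h | h
    · have hpos : 0 ≤ (p+q)^3*(t+1)/4 := by positivity
      linarith [ha1, hexpr, hr, hpos, hM0]
    · have hm : (t+1)*(8 - (p+q)^3) ≤ 0 :=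
        mul_nonpos_of_nonpos_of_nonneg h (by linarith)
      have h8 : 2*(t+1) ≤ (p+q)^3*(t+1)/4 := by nlinarith [hm]
      linarith [ha1, hexpr, hr, hC, h8]
  · -- upper bound
    have ha2 : (t-3)*(p+q)*(p*q) ≤ (t-3)*(p+q)*(p+q-1) :=
      mul_le_mul_of_nonpos_left hv1 hnp
    have hg := aux_edge t s (p+q) hs2 h2s hu hu2
    have hg' : (p+q)^3 + (t-3)*(p+q)*(p+q-1)
        = (p+q)^3 + (t-3)*(p+q)^2 - (t-3)*(p+q) := by ring
    linarith [ha2, hg, hexpr, hg']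

lemma main_pos (a t : ℝ) (ha : 0 < a) (h1 : b₁ < t) (h2 : t < 3 - 2*Real.sqrt 3) :
    supCubic a (a*t)
      = |a - (a*t)^2 / (3*a) + 2*(a*t)^3 / (27*a^2)
          + (2*a/27) * (-(3*(a*t))/a + (a*t)^2/a^2) ^ ((3:ℝ)/2)| := by
  have h3 : Real.sqrt 3 ^ 2 = 3 := Real.sq_sqrt (by norm_num)
  have h3n : (0:ℝ) ≤ Real.sqrt 3 := Real.sqrt_nonneg 3
  have h3lb : (3:ℝ)/2 < Real.sqrt 3 := by nlinarith
  have ht0 : t < 0 := by linarith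
  have htq : 0 < t^2 - 3*t := by nlinarith
  set s : ℝ := Real.sqrt (t^2 - 3*t) with hsdef
  have hs2 : s^2 = t^2 - 3*t := Real.sq_sqrt htq.le
  have hs0 : 0 < s := Real.sqrt_pos.mpr htq
  have h2s : 3 + t ≤ 2*s := by
    have hq : 0 < t^2 - 6*t - 3 := by nlinarith
    by_contra hcon
    push_neg at hcon
    nlinarith [mul_pos (show (0:ℝ) < 3 + t - 2*s by linarith)
      (show (0:ℝ) < 3 + t + 2*s by linarith), hq, hs2]
  have hcub : 0 < 7*t^3 - 27*t^2 + 81*t + 243 := cub_pos t h1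
  have ht3 : -3 < t := t_gt_neg3 t hcub
  have hC := aux_low t s hs2 hs0 hcub
  set M : ℝ := 1 - t^2/3 + 2*t^3/27 + 2*s^3/27 with hM
  have hM0 : 0 ≤ M := by
    have h := aux_edge t s 0 hs2 h2s le_rfl (by norm_num)
    rw [hM]; nlinarith [h]
  have hAM : 0 ≤ a * M := mul_nonneg ha.le hM0
  have hX : -(3*(a*t))/a + (a*t)^2/a^2 = s^2 := by
    rw [hs2]; field_simp; ring
  have h32 : (s^2 : ℝ) ^ ((3:ℝ)/2) = s^3 := by
    rw [← Real.rpow_natCast s 2, ← Real.rpow_mul hs0.le, ← Real.rpow_natCast s 3]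
    norm_num
  have hRHS : a - (a*t)^2 / (3*a) + 2*(a*t)^3 / (27*a^2)
      + (2*a/27) * (-(3*(a*t))/a + (a*t)^2/a^2) ^ ((3:ℝ)/2) = a * M := by
    rw [hX, h32, hM]
    field_simp
  rw [hRHS, abs_of_nonneg hAM, supCubic]
  apply IsGreatest.csSup_eq
  constructor
  · -- a*M is attained at x = -(t+s)/3, y = 1
    have hs3t : s < 3 - t := by
      by_contra hcon
      push_neg at hcon
      nlinarith [mul_le_mul hcon hcon (by linarith) (show (0:ℝ) ≤ s by linarith), hs2]
    refine ⟨-(t+s)/3, 1, ?_, by norm_num, ?_⟩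
    · rw [abs_le]
      constructor <;> [linarith; linarith]
    · have hval : a * (-(t+s)/3)^3 + a*t * (-(t+s)/3)^2 * 1 + a*t * (-(t+s)/3) * 1^2 + a * 1^3
          = a * M := by
        rw [hM]
        linear_combination (-(a*s)/9) * hs2
      rw [hval, abs_of_nonneg hAM]
  · rintro r ⟨x, y, hx, hy, rfl⟩
    have hcore := core t s x y hs2 hs0 h2s ht0 hC hx hy
    calc |a*x^3 + a*t*x^2*y + a*t*x*y^2 + a*y^3|
        = a * |x^3 + t*x^2*y + t*x*y^2 + y^3| := by
          rw [show a*x^3 + a*t*x^2*y + a*t*x*y^2 + a*y^3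
              = a * (x^3 + t*x^2*y + t*x*y^2 + y^3) by ring, abs_mul, abs_of_pos ha]
      _ ≤ a * M := mul_le_mul_of_nonneg_left hcore ha.le

theorem stmt10 (a b : ℝ) (ha : a ≠ 0) (h1 : b₁ < b / a) (h2 : b / a < 3 - 2 * Real.sqrt 3) :
    supCubic a b
      = |a - b^2 / (3*a) + 2*b^3 / (27*a^2)
          + (2*a/27) * (-(3*b)/a + b^2/a^2) ^ ((3:ℝ)/2)| := by
  rcases ha.lt_or_gt with hneg | hpos
  · -- a < 0 : reduce to (-a, -b)
    have hna : (0:ℝ) < -a := by linarith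
    have hrw : -b = (-a) * (b/a) := by
      rw [neg_mul, mul_div_assoc', mul_div_cancel_left₀ _ ha]
    have hmain := main_pos (-a) (b/a) hna h1 h2
    rw [← hrw] at hmain
    have hset : supCubic a b = supCubic (-a) (-b) := by
      unfold supCubic
      congr 1
      ext r
      constructor
      · rintro ⟨x, y, hx, hy, rfl⟩
        exact ⟨x, y, hx, hy, by
          rw [show (-a)*x^3 + (-b)*x^2*y + (-b)*x*y^2 + (-a)*y^3
            = -(a*x^3 + b*x^2*y + b*x*y^2 + a*y^3) by ring, abs_neg]⟩
      · rintro ⟨x, y, hx, hy, rfl⟩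
        exact ⟨x, y, hx, hy, by
          rw [show (-a)*x^3 + (-b)*x^2*y + (-b)*x*y^2 + (-a)*y^3
            = -(a*x^3 + b*x^2*y + b*x*y^2 + a*y^3) by ring, abs_neg]⟩
    rw [hset, hmain]
    have hXeq : -(3*(-b))/(-a) + (-b)^2/(-a)^2 = -(3*b)/a + b^2/a^2 := by
      field_simp
    rw [hXeq]
    set z : ℝ := (-(3*b)/a + b^2/a^2) ^ ((3:ℝ)/2) with hz
    rw [show (-a) - (-b)^2/(3*(-a)) + 2*(-b)^3/(27*(-a)^2) + (2*(-a)/27)*z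
        = -(a - b^2/(3*a) + 2*b^3/(27*a^2) + (2*a/27)*z) by field_simp; ring, abs_neg]
  · have hrw : b = a * (b/a) := by field_simp
    have hmain := main_pos a (b/a) hpos h1 h2
    rw [← hrw] at hmain
    exact hmain
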